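/- Let f : ℝ → ℝ be continuous. Define S_0(r) = ∫_0^r f(t) dt and, for n ≥ 1, S_n(r) = ∫_0^r t · S_{n-1}(t) dt. Then for every natural number n and every real number r, S_n(r) = (r^{2n+1} / (2^n · n!)) · ∫_0^1 (1 - z^2)^n · f(r·z) dz. -/

import Mathlib

open MeasureTheory intervalIntegral

noncomputable def Fm (f : ℝ → ℝ) (e : ℕ) (r : ℝ) : ℝ := ∫ u in (0:ℝ)..r, u ^ e * f u

noncomputable def Pp (f : ℝ → ℝ) (n : ℕ) (r : ℝ) : ℝ :=
  ∑ m ∈ Finset.range (n + 1),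
    ((-1 : ℝ) ^ (m + n) * (n.choose m)) * (r ^ (2 * m) * Fm f (2 * (n - m)) r)

lemma Fm_hasDerivAt (f : ℝ → ℝ) (hf : Continuous f) (e : ℕ) (r : ℝ) :
    HasDerivAt (Fm f e) (r ^ e * f r) r := by
  have hc : Continuous fun u : ℝ => u ^ e * f u := (continuous_pow e).mul hf
  exact intervalIntegral.integral_hasDerivAt_right (hc.intervalIntegrable _ _)
    (hc.stronglyMeasurableAtFilter _ _) hc.continuousAt

lemma Fm_continuous (f : ℝ → ℝ) (hf : Continuous f) (e : ℕ) : Continuous (Fm f e) := by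
  have hc : Continuous fun u : ℝ => u ^ e * f u := (continuous_pow e).mul hf
  exact intervalIntegral.continuous_primitive (fun a b => hc.intervalIntegrable a b) 0

lemma Pp_continuous (f : ℝ → ℝ) (hf : Continuous f) (n : ℕ) : Continuous (Pp f n) := by
  unfold Pp
  exact continuous_finset_sum _ fun m _ =>
    continuous_const.mul ((continuous_pow _).mul (Fm_continuous f hf _))

lemma Pp_zero_eq (f : ℝ → ℝ) (n : ℕ) : Pp f n 0 = 0 := by
  simp [Pp, Fm]

lemma expand (f : ℝ → ℝ) (hf : Continuous f) (n : ℕ) (r : ℝ) :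
    (∫ u in (0:ℝ)..r, (r ^ 2 - u ^ 2) ^ n * f u) = Pp f n r := by
  have key : ∀ u : ℝ, (r ^ 2 - u ^ 2) ^ n * f u =
      ∑ m ∈ Finset.range (n + 1),
        ((-1 : ℝ) ^ (m + n) * (n.choose m) * r ^ (2 * m)) * (u ^ (2 * (n - m)) * f u) := by
    intro u
    rw [sub_pow, Finset.sum_mul]
    refine Finset.sum_congr rfl fun m hm => ?_
    rw [← pow_mul, ← pow_mul]
    ring
  simp_rw [key]
  rw [intervalIntegral.integral_finset_sum]
  · unfold Pp Fm
    refine Finset.sum_congr rfl fun m hm => ?_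
    rw [intervalIntegral.integral_const_mul]
    ring
  · intro m hm
    exact Continuous.intervalIntegrable (by continuity) _ _

lemma Pp_hasDerivAt (f : ℝ → ℝ) (hf : Continuous f) (n : ℕ) (r : ℝ) :
    HasDerivAt (Pp f (n + 1)) ((2 * ((n : ℝ) + 1)) * (r * Pp f n r)) r := by
  have hterm : ∀ m ∈ Finset.range (n + 2),
      HasDerivAt (fun x : ℝ =>
          ((-1 : ℝ) ^ (m + (n + 1)) * ((n + 1).choose m)) * (x ^ (2 * m) * Fm f (2 * (n + 1 - m)) x))
        (((-1 : ℝ) ^ (m + (n + 1)) * ((n + 1).choose m)) *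
          (((2 * m : ℕ) : ℝ) * r ^ (2 * m - 1) * Fm f (2 * (n + 1 - m)) r +
            r ^ (2 * (n + 1)) * f r)) r := by
    intro m hm
    have hmle : m ≤ n + 1 := by
      have := Finset.mem_range.mp hm; omega
    have h1 : HasDerivAt (fun x : ℝ => x ^ (2 * m)) (((2 * m : ℕ) : ℝ) * r ^ (2 * m - 1)) r :=
      hasDerivAt_pow (2 * m) r
    have h2 := Fm_hasDerivAt f hf (2 * (n + 1 - m)) r
    have h3 := (h1.mul h2).const_mul ((-1 : ℝ) ^ (m + (n + 1)) * ((n + 1).choose m))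
    refine h3.congr_deriv ?_
    congr 1
    have he : 2 * m + 2 * (n + 1 - m) = 2 * (n + 1) := by omega
    rw [← he, pow_add]
    ring
  have hsum := HasDerivAt.fun_sum hterm
  have hPp : Pp f (n + 1) = fun x : ℝ => ∑ m ∈ Finset.range (n + 2),
      ((-1 : ℝ) ^ (m + (n + 1)) * ((n + 1).choose m)) *
        (x ^ (2 * m) * Fm f (2 * (n + 1 - m)) x) := by
    funext x; rfl
  rw [hPp]
  have hzero : (∑ m ∈ Finset.range (n + 2),
      ((-1 : ℝ) ^ (m + (n + 1)) * ((n + 1).choose m)) * (r ^ (2 * (n + 1)) * f r)) = 0 := by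
    rw [← Finset.sum_mul]
    have h0 : (∑ i ∈ Finset.range (n + 2), ((-1 : ℤ) ^ i * ((n + 1).choose i : ℤ))) = 0 :=
      Int.alternating_sum_range_choose_of_ne (Nat.succ_ne_zero n)
    have h0R : (∑ i ∈ Finset.range (n + 2), ((-1 : ℝ) ^ i * ((n + 1).choose i : ℝ))) = 0 := by
      have := congrArg (fun z : ℤ => (z : ℝ)) h0
      push_cast at this
      convert this using 2
    have hsum0 : (∑ m ∈ Finset.range (n + 2),
        ((-1 : ℝ) ^ (m + (n + 1)) * ((n + 1).choose m))) = 0 := by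
      calc (∑ m ∈ Finset.range (n + 2), ((-1 : ℝ) ^ (m + (n + 1)) * ((n + 1).choose m)))
          = (-1 : ℝ) ^ (n + 1) * ∑ m ∈ Finset.range (n + 2),
              ((-1 : ℝ) ^ m * ((n + 1).choose m : ℝ)) := by
            rw [Finset.mul_sum]
            refine Finset.sum_congr rfl fun m hm => ?_
            rw [pow_add]; ring
        _ = 0 := by rw [h0R, mul_zero]
    rw [hsum0, zero_mul]
  have hsplit : (∑ m ∈ Finset.range (n + 2),
      ((-1 : ℝ) ^ (m + (n + 1)) * ((n + 1).choose m)) *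
        (((2 * m : ℕ) : ℝ) * r ^ (2 * m - 1) * Fm f (2 * (n + 1 - m)) r +
          r ^ (2 * (n + 1)) * f r))
      = ∑ m ∈ Finset.range (n + 2),
        ((-1 : ℝ) ^ (m + (n + 1)) * ((n + 1).choose m)) *
          (((2 * m : ℕ) : ℝ) * r ^ (2 * m - 1) * Fm f (2 * (n + 1 - m)) r) := by
    calc (∑ m ∈ Finset.range (n + 2),
        ((-1 : ℝ) ^ (m + (n + 1)) * ((n + 1).choose m)) *
          (((2 * m : ℕ) : ℝ) * r ^ (2 * m - 1) * Fm f (2 * (n + 1 - m)) r +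
            r ^ (2 * (n + 1)) * f r))
        = ∑ m ∈ Finset.range (n + 2),
          (((-1 : ℝ) ^ (m + (n + 1)) * ((n + 1).choose m)) *
            (((2 * m : ℕ) : ℝ) * r ^ (2 * m - 1) * Fm f (2 * (n + 1 - m)) r) +
           ((-1 : ℝ) ^ (m + (n + 1)) * ((n + 1).choose m)) * (r ^ (2 * (n + 1)) * f r)) :=
        Finset.sum_congr rfl fun m _ => mul_add _ _ _
      _ = _ := by rw [Finset.sum_add_distrib, hzero, add_zero]
  refine hsum.congr_deriv (Eq.symm ?_)
  rw [hsplit, Finset.sum_range_succ']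
  simp only [Nat.mul_zero, Nat.cast_zero, zero_mul, mul_zero, add_zero, Nat.zero_add]
  rw [Pp]
  simp_rw [Finset.mul_sum]
  refine Finset.sum_congr rfl fun j hj => ?_
  have hjn : j < n + 1 := Finset.mem_range.mp hj
  have e1 : 2 * (j + 1) - 1 = 2 * j + 1 := by omega
  have e2 : n + 1 - (j + 1) = n - j := by omega
  have e3 : (-1 : ℝ) ^ (j + 1 + (n + 1)) = (-1 : ℝ) ^ (j + n) := by
    have h' : j + 1 + (n + 1) = (j + n) + 2 := by omega
    rw [h', pow_add, neg_one_sq, mul_one]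
  have e4 : ((n + 1).choose (j + 1) : ℝ) * (j + 1) = ((n : ℝ) + 1) * (n.choose j) := by
    have hnat := (Nat.add_one_mul_choose_eq n j).symm
    have hcast := congrArg (fun z : ℕ => (z : ℝ)) hnat
    push_cast at hcast
    linarith [hcast]
  rw [e1, e2, e3]
  have e5 : r ^ (2 * j + 1) = r ^ (2 * j) * r := by rw [pow_succ]
  rw [e5]
  push_cast
  linear_combination (-2 * (-1 : ℝ) ^ (j + n) * r ^ (2 * j) * r * Fm f (2 * (n - j)) r) * e4

lemma step_int (f : ℝ → ℝ) (hf : Continuous f) (n : ℕ) (r : ℝ) :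
    (∫ t in (0:ℝ)..r, t * Pp f n t) = Pp f (n + 1) r / (2 * ((n : ℝ) + 1)) := by
  have hcont : Continuous fun t : ℝ => (2 * ((n : ℝ) + 1)) * (t * Pp f n t) :=
    continuous_const.mul (continuous_id.mul (Pp_continuous f hf n))
  have key : (∫ t in (0:ℝ)..r, (2 * ((n : ℝ) + 1)) * (t * Pp f n t))
      = Pp f (n + 1) r - Pp f (n + 1) 0 := by
    exact intervalIntegral.integral_eq_sub_of_hasDerivAt
      (fun t _ => Pp_hasDerivAt f hf n t) (hcont.intervalIntegrable _ _)
  rw [intervalIntegral.integral_const_mul] at key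
  rw [Pp_zero_eq, sub_zero] at key
  have hne : (2 * ((n : ℝ) + 1)) ≠ 0 := by positivity
  field_simp
  linarith [key]

lemma subst_lemma (f : ℝ → ℝ) (hf : Continuous f) (n : ℕ) (r : ℝ) :
    r ^ (2 * n + 1) * ∫ z in (0:ℝ)..1, (1 - z ^ 2) ^ n * f (r * z) = Pp f n r := by
  rcases eq_or_ne r 0 with h | h
  · subst h
    simp [Pp, Fm]
  · rw [← expand f hf n r]
    have h3 := intervalIntegral.integral_comp_mul_left (a := (0:ℝ)) (b := 1)
      (fun u => (r ^ 2 - u ^ 2) ^ n * f u) h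
    simp only [mul_zero, mul_one, smul_eq_mul] at h3
    have h2 : ∀ z : ℝ, (r ^ 2 - (r * z) ^ 2) ^ n * f (r * z)
        = r ^ (2 * n) * ((1 - z ^ 2) ^ n * f (r * z)) := by
      intro z
      rw [show r ^ 2 - (r * z) ^ 2 = r ^ 2 * (1 - z ^ 2) by ring, mul_pow, ← pow_mul]
      ring
    simp_rw [h2] at h3
    rw [intervalIntegral.integral_const_mul] at h3
    have h5 : r * (r ^ (2 * n) * ∫ z in (0:ℝ)..1, (1 - z ^ 2) ^ n * f (r * z))
        = r * (r⁻¹ * ∫ u in (0:ℝ)..r, (r ^ 2 - u ^ 2) ^ n * f u) := by rw [h3]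
    have h6 : r * (r⁻¹ * ∫ u in (0:ℝ)..r, (r ^ 2 - u ^ 2) ^ n * f u)
        = ∫ u in (0:ℝ)..r, (r ^ 2 - u ^ 2) ^ n * f u := by
      rw [← mul_assoc, mul_inv_cancel₀ h, one_mul]
    rw [h6] at h5
    rw [← h5, pow_succ]
    ring

theorem iterated_integral_formula (f : ℝ → ℝ) (hf : Continuous f)
    (S : ℕ → ℝ → ℝ)
    (hS0 : ∀ r : ℝ, S 0 r = ∫ t in (0:ℝ)..r, f t)
    (hSn : ∀ (n : ℕ) (r : ℝ), S (n + 1) r = ∫ t in (0:ℝ)..r, t * S n t) :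
    ∀ (n : ℕ) (r : ℝ),
      S n r = (r ^ (2 * n + 1) / (2 ^ n * n.factorial)) *
        ∫ z in (0:ℝ)..1, (1 - z ^ 2) ^ n * f (r * z) := by
  have claim : ∀ (n : ℕ) (r : ℝ), S n r = Pp f n r / (2 ^ n * n.factorial) := by
    intro n
    induction n with
    | zero =>
      intro r
      rw [hS0]
      simp [Pp, Fm]
    | succ n ih =>
      intro r
      rw [hSn]
      have : (∫ t in (0:ℝ)..r, t * S n t)
          = ∫ t in (0:ℝ)..r, (t * Pp f n t) * ((2 : ℝ) ^ n * n.factorial)⁻¹ := by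
        refine intervalIntegral.integral_congr fun t _ => ?_
        rw [ih t]
        ring
      rw [this, intervalIntegral.integral_mul_const, step_int f hf n r]
      have hne1 : ((2 : ℝ) ^ n * n.factorial) ≠ 0 := by positivity
      have hne2 : (2 * ((n : ℝ) + 1)) ≠ 0 := by positivity
      have hden : ((2:ℝ) ^ (n+1) * ((n+1).factorial : ℝ)) = (2 * ((n:ℝ)+1)) * (2 ^ n * n.factorial) := by
        rw [Nat.factorial_succ]; push_cast; ring
      rw [← div_eq_mul_inv, div_div, hden]
  intro n r
  rw [claim n r, ← subst_lemma f hf n r]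
  ring
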